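/- Let (X,d) be a metric space, o ∈ X, let η : [0,∞) → [0,∞) be a nondecreasing sublinear function, and let d₁ > 0 be such that for all x, y ∈ X, d(x,y) ≤ η(d(x,o)) implies d₁·η(d(y,o)) ≤ η(d(x,o)). Let (x_n)_{n∈ℕ} be a sequence in X with d(x_n, x_{n+1}) ≤ η(d(x_n, o)) for all n, and let (n_i)_{i∈ℕ} be a strictly increasing sequence of indices with n_{i+1} − n_i ≤ F + 1 for all i, where F ∈ ℕ. Then d(x_{n_i}, x_{n_{i+1}}) ≤ (Σ_{k=0}^{F} d₁^{−k})·η(d(x_{n_i}, o)) for all i. -/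

import Mathlib

open Filter

/-- Let `(X,d)` be a metric space, `o ∈ X`, `η : [0,∞) → [0,∞)`
nondecreasing sublinear, and `d₁ > 0` such that `d(x,y) ≤ η(d(x,o))` implies
`d₁·η(d(y,o)) ≤ η(d(x,o))`. Let `(x_n)` satisfy `d(x_n, x_{n+1}) ≤ η(d(x_n, o))` and
let `(n_i)` be strictly increasing with `n_{i+1} − n_i ≤ F + 1`. Then
`d(x_{n_i}, x_{n_{i+1}}) ≤ (Σ_{k=0}^{F} d₁^{−k})·η(d(x_{n_i}, o))` for all `i`. -/
theorem subsequence_preserves_sublinear_bound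
    {X : Type*} [MetricSpace X] (o : X) (η : ℝ → ℝ) (d₁ : ℝ) (F : ℕ)
    (x : ℕ → X) (n : ℕ → ℕ)
    (hη_mono : MonotoneOn η (Set.Ici 0))
    (hη_nonneg : ∀ t : ℝ, 0 ≤ t → 0 ≤ η t)
    (hη_sub : Tendsto (fun t : ℝ => η t / t) atTop (nhds 0))
    (hd₁ : 0 < d₁)
    (hcontract : ∀ p q : X, dist p q ≤ η (dist p o) →
      d₁ * η (dist q o) ≤ η (dist p o))
    (hx : ∀ k : ℕ, dist (x k) (x (k + 1)) ≤ η (dist (x k) o))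
    (hn_mono : StrictMono n)
    (hn_gap : ∀ i : ℕ, n (i + 1) - n i ≤ F + 1) :
    ∀ i : ℕ, dist (x (n i)) (x (n (i + 1))) ≤
      (∑ k ∈ Finset.range (F + 1), (d₁⁻¹) ^ k) * η (dist (x (n i)) o) := by
  -- one-step decay of η
  have hstep : ∀ k : ℕ, η (dist (x (k + 1)) o) ≤ d₁⁻¹ * η (dist (x k) o) := by
    intro k
    have h := hcontract (x k) (x (k + 1)) (hx k)
    rw [inv_mul_eq_div, le_div_iff₀ hd₁]
    linarith [h]
  have hiter : ∀ (a j : ℕ), η (dist (x (a + j)) o) ≤ (d₁⁻¹) ^ j * η (dist (x a) o) := by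
    intro a j
    induction j with
    | zero => simp
    | succ j ih =>
      calc η (dist (x (a + (j + 1))) o) ≤ d₁⁻¹ * η (dist (x (a + j)) o) := hstep (a + j)
        _ ≤ d₁⁻¹ * ((d₁⁻¹) ^ j * η (dist (x a) o)) := by
            apply mul_le_mul_of_nonneg_left ih (by positivity)
        _ = (d₁⁻¹) ^ (j + 1) * η (dist (x a) o) := by ring
  intro i
  set a := n i with ha
  have hL : n (i + 1) = a + (n (i + 1) - n i) := by
    have := (hn_mono (lt_add_one i)).le
    omega
  set L := n (i + 1) - n i with hLdef
  have hLF : L ≤ F + 1 := hn_gap i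
  have hC : 0 ≤ η (dist (x a) o) := hη_nonneg _ dist_nonneg
  rw [hL]
  calc dist (x a) (x (a + L)) ≤ ∑ j ∈ Finset.range L, dist (x (a + j)) (x (a + j + 1)) := by
        have := dist_le_range_sum_dist (fun j => x (a + j)) L
        simpa [add_assoc] using this
    _ ≤ ∑ j ∈ Finset.range L, (d₁⁻¹) ^ j * η (dist (x a) o) := by
        apply Finset.sum_le_sum
        intro j _
        exact le_trans (hx (a + j)) (hiter a j)
    _ ≤ ∑ j ∈ Finset.range (F + 1), (d₁⁻¹) ^ j * η (dist (x a) o) := by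
        apply Finset.sum_le_sum_of_subset_of_nonneg (Finset.range_subset_range.2 hLF)
        intro j _ _
        positivity
    _ = (∑ k ∈ Finset.range (F + 1), (d₁⁻¹) ^ k) * η (dist (x a) o) := by
        rw [Finset.sum_mul]
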